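/- (HCB for segment infilling) Let p be a probability distribution with full support on A^n, and let 1 ≤ j ≤ k ≤ n. Let x, x' ∈ A^n be two sequences that agree on all coordinates outside the window {j,…,k}, and let y ∈ A^n be any pivot sequence. Then the ratio of conditional probabilities of the two infilled segments given the common context satisfies p(x_{j:k} | x_{<j}, x_{>k}) / p(x'_{j:k} | x_{<j}, x_{>k}) = ∏_{i=j}^{k} [ p(x_i | x_{<i}, y_{i+1:k}, x_{>k}) / p(y_i | x_{<i}, y_{i+1:k}, x_{>k}) ] · [ p(y_i | x'_{<i}, y_{i+1:k}, x_{>k}) / p(x'_i | x'_{<i}, y_{i+1:k}, x_{>k}) ], where each factor is the hybrid conditional of p at coordinate i given the indicated values at all other coordinates (x-values before i inside the window and on the left context, y-values strictly between i and k inside the window, and the common values outside the window). -/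
import Mathlib


/-- The single-site conditional of `p` at coordinate `i`, given that every other coordinate
`t ≠ i` takes the value `w t`: the probability of the full sequence with `a` at position `i`
divided by the sum over `b ∈ A` of the probabilities of the full sequences with `b` at
position `i`. -/
noncomputable def siteCond {A : Type*} [Fintype A] {n : ℕ}
    (p : (Fin n → A) → ℝ) (w : Fin n → A) (i : Fin n) (a : A) : ℝ :=
  p (Function.update w i a) / ∑ b : A, p (Function.update w i b)

/-- Telescoping product over a ℕ-interval. -/
lemma tele_aux (f : ℕ → ℝ) (hf : ∀ m, f m ≠ 0) (a : ℕ) :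
    ∀ b, a ≤ b → ∏ i ∈ Finset.Icc a b, (f (i + 1) / f i) = f (b + 1) / f a := by
  intro b hb
  induction b, hb using Nat.le_induction with
  | base => simp
  | succ b hb ih =>
    rw [Finset.prod_Icc_succ_top (by omega), ih, div_mul_div_comm,
      mul_comm (f (b + 1)) (f (b + 1 + 1)), mul_div_mul_right _ _ (hf (b + 1))]

/-- Reversed telescoping product. -/
lemma tele_aux' (f : ℕ → ℝ) (hf : ∀ m, f m ≠ 0) (a b : ℕ) (hb : a ≤ b) :
    ∏ i ∈ Finset.Icc a b, (f i / f (i + 1)) = f a / f (b + 1) := by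
  have h := tele_aux f hf a b hb
  have : ∏ i ∈ Finset.Icc a b, (f i / f (i + 1))
      = (∏ i ∈ Finset.Icc a b, (f (i + 1) / f i))⁻¹ := by
    rw [← Finset.prod_inv_distrib]
    exact Finset.prod_congr rfl fun i _ => (inv_div _ _).symm
  rw [this, h, inv_div]

/-- Ratio of two site conditionals at the same context. -/
lemma siteCond_ratio {A : Type*} [Fintype A] [Nonempty A] {n : ℕ}
    (p : (Fin n → A) → ℝ) (hpos : ∀ w, 0 < p w) (w : Fin n → A) (i : Fin n) (a b : A) :
    siteCond p w i a / siteCond p w i b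
      = p (Function.update w i a) / p (Function.update w i b) := by
  unfold siteCond
  have hD : (∑ c : A, p (Function.update w i c)) ≠ 0 := by
    have : 0 < ∑ c : A, p (Function.update w i c) :=
      Finset.sum_pos (fun c _ => hpos _) Finset.univ_nonempty
    exact this.ne'
  rw [div_div_div_comm, div_self hD, div_one]

theorem hcb_segment_infilling
    {A : Type*} [Fintype A] [DecidableEq A] [Nonempty A] {n : ℕ}
    (p : (Fin n → A) → ℝ)
    (hsum : ∑ w : Fin n → A, p w = 1) (hpos : ∀ w, 0 < p w)
    (j k : Fin n) (hjk : j ≤ k)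
    (x x' y : Fin n → A)
    (hagree : ∀ t, (t < j ∨ k < t) → x' t = x t) :
    (p x / ∑ w : Fin n → A, if (∀ t, (t < j ∨ k < t) → w t = x t) then p w else 0) /
      (p x' / ∑ w : Fin n → A, if (∀ t, (t < j ∨ k < t) → w t = x t) then p w else 0) =
    ∏ i ∈ Finset.Icc j k,
      (siteCond p (fun t => if i < t ∧ t ≤ k then y t else x t) i (x i) /
          siteCond p (fun t => if i < t ∧ t ≤ k then y t else x t) i (y i)) *
        (siteCond p (fun t => if i < t ∧ t ≤ k then y t else x' t) i (y i) /
          siteCond p (fun t => if i < t ∧ t ≤ k then y t else x' t) i (x' i)) := by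
  -- the normalizing sum is nonzero, so the LHS is p x / p x'
  set S : ℝ := ∑ w : Fin n → A, if (∀ t, (t < j ∨ k < t) → w t = x t) then p w else 0 with hS
  have hSpos : 0 < S := by
    rw [hS]
    refine Finset.sum_pos' (fun w _ => ?_) ⟨x, Finset.mem_univ x, ?_⟩
    · split_ifs
      · exact (hpos w).le
      · exact le_refl 0
    · rw [if_pos fun t _ => rfl]; exact hpos x
  have hLHS : (p x / S) / (p x' / S) = p x / p x' := by
    rw [div_div_div_comm, div_self hSpos.ne', div_one]
  rw [hLHS]
  -- the telescoping sequences
  set Q : ℕ → ℝ := fun m => p (fun t => if m ≤ (t : ℕ) ∧ t ≤ k then y t else x t) with hQ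
  set Q' : ℕ → ℝ := fun m => p (fun t => if m ≤ (t : ℕ) ∧ t ≤ k then y t else x' t) with hQ'
  have hQne : ∀ m, Q m ≠ 0 := fun m => (hpos _).ne'
  have hQ'ne : ∀ m, Q' m ≠ 0 := fun m => (hpos _).ne'
  -- rewrite each factor of the product
  have hfac : ∀ i ∈ Finset.Icc j k,
      (siteCond p (fun t => if i < t ∧ t ≤ k then y t else x t) i (x i) /
          siteCond p (fun t => if i < t ∧ t ≤ k then y t else x t) i (y i)) *
        (siteCond p (fun t => if i < t ∧ t ≤ k then y t else x' t) i (y i) /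
          siteCond p (fun t => if i < t ∧ t ≤ k then y t else x' t) i (x' i))
      = (Q ((i : ℕ) + 1) / Q (i : ℕ)) * (Q' (i : ℕ) / Q' ((i : ℕ) + 1)) := by
    intro i hi
    rw [Finset.mem_Icc] at hi
    obtain ⟨hji, hik⟩ := hi
    rw [siteCond_ratio p hpos, siteCond_ratio p hpos]
    have key : ∀ z : Fin n → A,
        Function.update (fun t => if i < t ∧ t ≤ k then y t else z t) i (z i)
          = (fun t : Fin n => if (i : ℕ) + 1 ≤ (t : ℕ) ∧ t ≤ k then y t else z t) ∧
        Function.update (fun t => if i < t ∧ t ≤ k then y t else z t) i (y i)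
          = (fun t : Fin n => if (i : ℕ) ≤ (t : ℕ) ∧ t ≤ k then y t else z t) := by
      intro z
      constructor
      · funext t
        by_cases ht : t = i
        · subst ht
          rw [Function.update_self, if_neg (by omega)]
        · rw [Function.update_of_ne ht]
          have htv : (t : ℕ) ≠ (i : ℕ) := fun h => ht (Fin.val_injective h)
          by_cases h : i < t ∧ t ≤ k
          · rw [if_pos h, if_pos ⟨by exact_mod_cast h.1, h.2⟩]
          · rw [if_neg h, if_neg (by
              intro ⟨h1, h2⟩
              exact h ⟨by exact_mod_cast (Nat.lt_of_succ_le h1), h2⟩)]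
      · funext t
        by_cases ht : t = i
        · subst ht
          rw [Function.update_self, if_pos ⟨le_refl _, hik⟩]
        · rw [Function.update_of_ne ht]
          have htv : (t : ℕ) ≠ (i : ℕ) := fun h => ht (Fin.val_injective h)
          by_cases h : i < t ∧ t ≤ k
          · rw [if_pos h, if_pos ⟨le_of_lt (by exact_mod_cast h.1), h.2⟩]
          · rw [if_neg h, if_neg (by
              intro ⟨h1, h2⟩
              exact h ⟨by
                have : (i : ℕ) < (t : ℕ) := lt_of_le_of_ne h1 (Ne.symm htv)
                exact_mod_cast this, h2⟩)]
    obtain ⟨hx1, hx2⟩ := key x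
    obtain ⟨hx1', hx2'⟩ := key x'
    rw [hx1, hx2, hx1', hx2']
  rw [Finset.prod_congr rfl hfac, Finset.prod_mul_distrib]
  -- move the products to ℕ-intervals and telescope
  have hvalk : (j : ℕ) ≤ (k : ℕ) := hjk
  have hmap : ∀ F : ℕ → ℝ, ∏ i ∈ Finset.Icc j k, F (i : ℕ)
      = ∏ m ∈ Finset.Icc (j : ℕ) (k : ℕ), F m := by
    intro F
    rw [← Fin.map_valEmbedding_Icc, Finset.prod_map]
    rfl
  rw [hmap (fun m => Q (m + 1) / Q m), hmap (fun m => Q' m / Q' (m + 1)),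
    tele_aux Q hQne _ _ hvalk, tele_aux' Q' hQ'ne _ _ hvalk]
  -- identify endpoints
  have hQk : Q ((k : ℕ) + 1) = p x := by
    show p (fun t => if (k : ℕ) + 1 ≤ (t : ℕ) ∧ t ≤ k then y t else x t) = p x
    congr 1
    funext t
    rw [if_neg (by
      intro ⟨h1, h2⟩
      have : (t : ℕ) ≤ (k : ℕ) := h2
      omega)]
  have hQ'k : Q' ((k : ℕ) + 1) = p x' := by
    show p (fun t => if (k : ℕ) + 1 ≤ (t : ℕ) ∧ t ≤ k then y t else x' t) = p x'
    congr 1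
    funext t
    rw [if_neg (by
      intro ⟨h1, h2⟩
      have : (t : ℕ) ≤ (k : ℕ) := h2
      omega)]
  have hQj : Q (j : ℕ) = Q' (j : ℕ) := by
    show p (fun t => if (j : ℕ) ≤ (t : ℕ) ∧ t ≤ k then y t else x t)
      = p (fun t => if (j : ℕ) ≤ (t : ℕ) ∧ t ≤ k then y t else x' t)
    congr 1
    funext t
    by_cases h : (j : ℕ) ≤ (t : ℕ) ∧ t ≤ k
    · rw [if_pos h, if_pos h]
    · rw [if_neg h, if_neg h]
      refine (hagree t ?_).symm
      rw [Fin.lt_def, Fin.lt_def]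
      have : (t : ℕ) ≤ (k : ℕ) ∨ ¬ (t : ℕ) ≤ (k : ℕ) := em _
      rcases this with h2 | h2
      · left; by_contra hc; exact h ⟨by omega, h2⟩
      · right; omega
  rw [hQk, hQ'k, hQj, div_mul_div_comm, mul_comm (Q' (j : ℕ)) (p x'),
    mul_div_mul_right _ _ (hQ'ne (j : ℕ))]
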